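/- Let α be a complex number with Im(α) > 0. Then ∫_{−∞}^{∞} sin(πx)/(x + α) dx = π · e^{iπα}. -/

import Mathlib

set_option maxHeartbeats 1000000

open scoped Real
open MeasureTheory Filter
open Set Complex

noncomputable section

lemma log_neg_of_im_neg {w : ℂ} (h : w.im < 0) :
    Complex.log (-w) = Complex.log w + π * I := by
  unfold Complex.log
  rw [norm_neg, Complex.arg_neg_eq_arg_add_pi_of_im_neg h]
  push_cast
  ring

lemma log_neg_of_im_pos {w : ℂ} (h : 0 < w.im) :
    Complex.log (-w) = Complex.log w - π * I := by
  unfold Complex.log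
  rw [norm_neg, Complex.arg_neg_eq_arg_sub_pi_of_im_pos h]
  push_cast
  ring

lemma horiz_integral (α : ℂ) (T a b : ℝ) (h : T + α.im ≠ 0) :
    ∫ x : ℝ in a..b, ((x : ℂ) + (T : ℂ) * I + α)⁻¹
      = Complex.log ((b : ℂ) + (T : ℂ) * I + α) - Complex.log ((a : ℂ) + (T : ℂ) * I + α) := by
  have him : ∀ x : ℝ, ((x : ℂ) + (T : ℂ) * I + α).im = T + α.im := by intro x; simp
  have hne : ∀ x : ℝ, ((x : ℂ) + (T : ℂ) * I + α) ≠ 0 := by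
    intro x h0
    have := him x
    rw [h0] at this
    simp at this
    exact h this.symm
  have key : ∀ x : ℝ, HasDerivAt (fun t : ℝ => Complex.log ((t : ℂ) + (T : ℂ) * I + α))
      (((x : ℂ) + (T : ℂ) * I + α)⁻¹) x := by
    intro x
    have hd : HasDerivAt (fun z : ℂ => z + (T : ℂ) * I + α) 1 (x : ℂ) := by
      simpa [add_assoc] using ((hasDerivAt_id ((x : ℝ) : ℂ)).add_const ((T : ℂ) * I + α))
    have hl := Complex.hasDerivAt_log
      (Complex.mem_slitPlane_iff.mpr (Or.inr (by rw [him x]; exact h)))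
    have := hl.comp (x : ℂ) hd
    simpa using this.comp_ofReal
  refine intervalIntegral.integral_eq_sub_of_hasDerivAt (fun x _ => key x) ?_
  exact (((Complex.continuous_ofReal.add continuous_const).add continuous_const).inv₀
    hne).intervalIntegrable a b

lemma vert_integral_pos (α : ℂ) (c a b : ℝ) (h : 0 < c + α.re) :
    I • ∫ y : ℝ in a..b, ((c : ℂ) + (y : ℂ) * I + α)⁻¹
      = Complex.log ((c : ℂ) + (b : ℂ) * I + α) - Complex.log ((c : ℂ) + (a : ℂ) * I + α) := by
  have key : ∀ y : ℝ, HasDerivAt (fun t : ℝ => Complex.log ((c : ℂ) + (t : ℂ) * I + α))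
      (((c : ℂ) + (y : ℂ) * I + α)⁻¹ * I) y := by
    intro y
    have hd : HasDerivAt (fun z : ℂ => (c : ℂ) + z * I + α) I ((y : ℝ) : ℂ) := by
      simpa using (((hasDerivAt_id ((y : ℝ) : ℂ)).mul_const I).const_add ((c : ℝ) : ℂ)).add_const α
    have hs : ((c : ℂ) + (y : ℂ) * I + α) ∈ Complex.slitPlane := by
      refine Complex.mem_slitPlane_iff.mpr (Or.inl ?_)
      simpa using h
    have := (Complex.hasDerivAt_log hs).comp ((y : ℝ) : ℂ) hd
    simpa using this.comp_ofReal
  have hint : ∫ y : ℝ in a..b, (((c : ℂ) + (y : ℂ) * I + α)⁻¹ * I)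
      = Complex.log ((c : ℂ) + (b : ℂ) * I + α) - Complex.log ((c : ℂ) + (a : ℂ) * I + α) := by
    refine intervalIntegral.integral_eq_sub_of_hasDerivAt (fun y _ => key y) ?_
    have hne : ∀ y : ℝ, ((c : ℂ) + (y : ℂ) * I + α) ≠ 0 := by
      intro y h0
      have : ((c : ℂ) + (y : ℂ) * I + α).re = 0 := by rw [h0]; simp
      simp at this
      rw [this] at h
      simp at h
    exact ((((continuous_const.add (Complex.continuous_ofReal.mul continuous_const)).add
      continuous_const).inv₀ hne).mul continuous_const).intervalIntegrable a b
  rw [← hint, intervalIntegral.integral_mul_const, smul_eq_mul, mul_comm]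

lemma vert_integral_neg (α : ℂ) (c a b : ℝ) (h : c + α.re < 0) :
    I • ∫ y : ℝ in a..b, ((c : ℂ) + (y : ℂ) * I + α)⁻¹
      = Complex.log (-((c : ℂ) + (b : ℂ) * I + α)) - Complex.log (-((c : ℂ) + (a : ℂ) * I + α)) := by
  have key : ∀ y : ℝ, HasDerivAt (fun t : ℝ => Complex.log (-((c : ℂ) + (t : ℂ) * I + α)))
      (((c : ℂ) + (y : ℂ) * I + α)⁻¹ * I) y := by
    intro y
    have hd : HasDerivAt (fun z : ℂ => -((c : ℂ) + z * I + α)) (-I) ((y : ℝ) : ℂ) := by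
      have := ((((hasDerivAt_id ((y : ℝ) : ℂ)).mul_const I).const_add
        ((c : ℝ) : ℂ)).add_const α).neg
      simp only [one_mul] at this; exact this
    have hs : (-((c : ℂ) + (y : ℂ) * I + α)) ∈ Complex.slitPlane := by
      refine Complex.mem_slitPlane_iff.mpr (Or.inl ?_)
      simp only [Complex.neg_re, Complex.add_re, Complex.ofReal_re, Complex.mul_re,
        Complex.ofReal_im, Complex.I_re, Complex.I_im]
      nlinarith [h]
    have h2 := (Complex.hasDerivAt_log hs).comp ((y : ℝ) : ℂ) hd
    have h3 := h2.comp_ofReal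
    have hne : ((c : ℂ) + (y : ℂ) * I + α) ≠ 0 := by
      intro h0
      have : ((c : ℂ) + (y : ℂ) * I + α).re = 0 := by rw [h0]; simp
      simp at this
      rw [this] at h
      simp at h
    have heq : (-((c : ℂ) + (y : ℂ) * I + α))⁻¹ * -I = ((c : ℂ) + (y : ℂ) * I + α)⁻¹ * I := by
      rw [inv_neg]; ring
    have h4 : HasDerivAt (fun t : ℝ => Complex.log (-((c : ℂ) + (t : ℂ) * I + α)))
        ((-((c : ℂ) + (y : ℂ) * I + α))⁻¹ * -I) y := h3
    rw [heq] at h4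
    exact h4
  have hint : ∫ y : ℝ in a..b, (((c : ℂ) + (y : ℂ) * I + α)⁻¹ * I)
      = Complex.log (-((c : ℂ) + (b : ℂ) * I + α)) - Complex.log (-((c : ℂ) + (a : ℂ) * I + α)) := by
    refine intervalIntegral.integral_eq_sub_of_hasDerivAt (fun y _ => key y) ?_
    have hne : ∀ y : ℝ, ((c : ℂ) + (y : ℂ) * I + α) ≠ 0 := by
      intro y h0
      have : ((c : ℂ) + (y : ℂ) * I + α).re = 0 := by rw [h0]; simp
      simp at this
      rw [this] at h
      simp at h
    exact ((((continuous_const.add (Complex.continuous_ofReal.mul continuous_const)).add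
      continuous_const).inv₀ hne).mul continuous_const).intervalIntegrable a b
  rw [← hint, intervalIntegral.integral_mul_const, smul_eq_mul, mul_comm]

lemma rect_inv (α : ℂ) (hα : 0 < α.im) (R : ℝ) (hR : ‖α‖ < R) :
    ((∫ x : ℝ in (-R)..R, ((x : ℂ) + ((-R : ℝ) : ℂ) * I + α)⁻¹)
      - ∫ x : ℝ in (-R)..R, ((x : ℂ) + ((0 : ℝ) : ℂ) * I + α)⁻¹)
      + I • (∫ y : ℝ in (-R)..(0 : ℝ), ((R : ℂ) + (y : ℂ) * I + α)⁻¹)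
      - I • (∫ y : ℝ in (-R)..(0 : ℝ), (((-R : ℝ) : ℂ) + (y : ℂ) * I + α)⁻¹)
      = 2 * π * I := by
  have habs := Complex.abs_im_le_norm α
  have habs' := Complex.abs_re_le_norm α
  have h1 : (-R) + α.im ≠ 0 := by
    rw [abs_le] at habs; linarith [habs.2]
  have h2 : (0 : ℝ) + α.im ≠ 0 := by simp; linarith
  have h3 : 0 < R + α.re := by rw [abs_le] at habs'; linarith [habs'.1]
  have h4 : (-R) + α.re < 0 := by rw [abs_le] at habs'; linarith [habs'.2]
  rw [horiz_integral α (-R) (-R) R h1, horiz_integral α 0 (-R) R h2,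
    vert_integral_pos α R (-R) 0 h3, vert_integral_neg α (-R) (-R) 0 h4]
  have e1 : (((0 : ℝ) : ℂ)) * I = 0 := by simp
  have hu : (-(((-R : ℝ) : ℂ) + ((0 : ℝ) : ℂ) * I + α)) = -(((-R : ℝ) : ℂ) + α) := by
    rw [e1]; ring
  have hv0 : (((-R : ℝ) : ℂ) + ((0 : ℝ) : ℂ) * I + α) = (((-R : ℝ) : ℂ) + α) := by
    rw [e1]; ring
  -- u := α - R : im = α.im > 0 ; so log(-(α - R)) = log (α - R) - π I
  have key1 : Complex.log (-(((-R : ℝ) : ℂ) + α)) = Complex.log (((-R : ℝ) : ℂ) + α) - π * I := by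
    apply log_neg_of_im_pos
    simp [hα]
  -- v := -R - R I + α : im = α.im - R < 0 ; log(-v) = log v + π I
  have key2 : Complex.log (-(((-R : ℝ) : ℂ) + ((-R : ℝ) : ℂ) * I + α))
      = Complex.log ((((-R : ℝ) : ℂ) + ((-R : ℝ) : ℂ) * I + α)) + π * I := by
    apply log_neg_of_im_neg
    simp only [Complex.add_im, Complex.ofReal_im, Complex.mul_im, Complex.ofReal_re,
      Complex.I_im, Complex.I_re]
    rw [abs_le] at habs
    simp
    linarith [habs.2]
  rw [hu, hv0, key1, key2]
  ring

lemma rect_zero' (f : ℂ → ℂ) (a b c d : ℝ)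
    (H : DifferentiableOn ℂ f (Set.uIcc a b ×ℂ Set.uIcc c d)) :
    ((∫ x : ℝ in a..b, f ((x : ℂ) + (c : ℂ) * I))
      - ∫ x : ℝ in a..b, f ((x : ℂ) + (d : ℂ) * I))
      + I • (∫ y : ℝ in c..d, f ((b : ℂ) + (y : ℂ) * I))
      - I • (∫ y : ℝ in c..d, f ((a : ℂ) + (y : ℂ) * I)) = 0 := by
  have h1 : ((a : ℂ) + (c : ℂ) * I).re = a := by simp
  have h2 : ((a : ℂ) + (c : ℂ) * I).im = c := by simp
  have h3 : ((b : ℂ) + (d : ℂ) * I).re = b := by simp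
  have h4 : ((b : ℂ) + (d : ℂ) * I).im = d := by simp
  have := Complex.integral_boundary_rect_eq_zero_of_differentiableOn f
    ((a : ℂ) + (c : ℂ) * I) ((b : ℂ) + (d : ℂ) * I) (by rw [h1, h2, h3, h4]; exact H)
  rw [h1, h2, h3, h4] at this
  exact this

lemma norm_exp_neg_pi_I_mul (z : ℂ) : ‖Complex.exp (-((π : ℂ) * I * z))‖ = Real.exp (π * z.im) := by
  rw [Complex.norm_exp]
  congr 1
  simp [Complex.mul_re]

lemma norm_exp_pi_I_mul (z : ℂ) : ‖Complex.exp ((π : ℂ) * I * z)‖ = Real.exp (-(π * z.im)) := by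
  rw [Complex.norm_exp]
  congr 1
  simp [Complex.mul_re]

lemma abs_add_lower (α z : ℂ) : ‖z‖ - ‖α‖ ≤ ‖(z + α)‖ := by
  have h := norm_add_le (z + α) (-α)
  simp at h
  linarith [h]

lemma int_exp_pi (R : ℝ) (hR : 0 ≤ R) :
    (∫ y : ℝ in (-R)..(0 : ℝ), Real.exp (π * y)) ≤ 1 := by
  have key : ∀ y : ℝ, HasDerivAt (fun t : ℝ => Real.exp (π * t) / π) (Real.exp (π * y)) y := by
    intro y
    have h1 : HasDerivAt (fun t : ℝ => π * t) π y := by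
      simpa using (hasDerivAt_id y).const_mul π
    have h2 := (Real.hasDerivAt_exp (π * y)).comp y h1
    have h3 := h2.div_const π
    have : Real.exp (π * y) * π / π = Real.exp (π * y) := by
      field_simp
    rwa [this] at h3
  have heq : (∫ y : ℝ in (-R)..(0 : ℝ), Real.exp (π * y))
      = Real.exp (π * 0) / π - Real.exp (π * (-R)) / π := by
    refine intervalIntegral.integral_eq_sub_of_hasDerivAt (fun y _ => key y) ?_
    exact (Real.continuous_exp.comp (continuous_const.mul continuous_id)).intervalIntegrable _ _
  rw [heq]
  have h1 : 0 < Real.exp (π * (-R)) := Real.exp_pos _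
  have h2 : (3:ℝ) < π := Real.pi_gt_three
  rw [mul_zero, Real.exp_zero]
  rw [div_sub_div_same, div_le_one (by linarith)]
  linarith

lemma split_edge (α c₀ : ℂ) (f g : ℂ → ℂ) (hf : Continuous f) (hg : Continuous g)
    (hrel : ∀ z : ℂ, z + α ≠ 0 → f z / (z + α) = g z + c₀ * (z + α)⁻¹)
    (γ : ℝ → ℂ) (hγ : Continuous γ) (hne : ∀ t : ℝ, γ t + α ≠ 0) (a b : ℝ) :
    ∫ t : ℝ in a..b, f (γ t) / (γ t + α)
      = (∫ t : ℝ in a..b, g (γ t)) + c₀ * ∫ t : ℝ in a..b, (γ t + α)⁻¹ := by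
  have hint1 : IntervalIntegrable (fun t => g (γ t)) volume a b :=
    (hg.comp hγ).intervalIntegrable a b
  have hcont2 : Continuous fun t => (γ t + α)⁻¹ := (hγ.add continuous_const).inv₀ hne
  have hint2 : IntervalIntegrable (fun t => c₀ * (γ t + α)⁻¹) volume a b :=
    (continuous_const.mul hcont2).intervalIntegrable a b
  rw [← intervalIntegral.integral_const_mul, ← intervalIntegral.integral_add hint1 hint2]
  apply intervalIntegral.integral_congr
  intro t _
  exact hrel (γ t) (hne t)

lemma tendsto_B (α : ℂ) (hα : 0 < α.im) :
    Tendsto (fun R : ℝ => ∫ x : ℝ in (-R)..R, Complex.exp (-((π : ℂ) * I * x)) / ((x : ℂ) + α))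
      atTop (nhds (-(2 * (π : ℂ) * I * Complex.exp ((π : ℂ) * I * α)))) := by
  have habs0 : (0:ℝ) ≤ ‖α‖ := norm_nonneg α
  have habs_im := Complex.abs_im_le_norm α
  have habs_re := Complex.abs_re_le_norm α
  rw [abs_le] at habs_im habs_re
  set f : ℂ → ℂ := fun z => Complex.exp (-((π:ℂ) * I * z)) with hf_def
  set c₀ : ℂ := Complex.exp ((π:ℂ) * I * α) with hc₀_def
  have hf : Differentiable ℂ f := (((differentiable_const ((π:ℂ) * I)).mul differentiable_id).neg).cexp
  set g : ℂ → ℂ := dslope f (-α) with hg_def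
  have hg : Differentiable ℂ g := by
    rw [← differentiableOn_univ]
    exact (Complex.differentiableOn_dslope (Filter.univ_mem)).mpr hf.differentiableOn
  have hrel : ∀ z : ℂ, z + α ≠ 0 → f z / (z + α) = g z + c₀ * (z + α)⁻¹ := by
    intro z hz
    have hzne : z ≠ -α := fun h => hz (by rw [h]; ring)
    have hfα : f (-α) = c₀ := by
      show Complex.exp (-((π:ℂ) * I * (-α))) = Complex.exp ((π:ℂ) * I * α)
      congr 1
      ring
    rw [hg_def, dslope_of_ne _ hzne, slope_def_field, hfα, sub_neg_eq_add]
    field_simp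
    ring
  -- main identity for large R
  have main : ∀ R : ℝ, ‖α‖ + 1 ≤ R →
      (∫ x : ℝ in (-R)..R, f (x : ℂ) / ((x : ℂ) + α))
        = (((∫ x : ℝ in (-R)..R, f ((x:ℂ) + ((-R:ℝ):ℂ) * I) / (((x:ℂ) + ((-R:ℝ):ℂ) * I) + α))
          + I • (∫ y : ℝ in (-R)..(0:ℝ), f ((R:ℂ) + (y:ℂ) * I) / (((R:ℂ) + (y:ℂ) * I) + α)))
          - I • (∫ y : ℝ in (-R)..(0:ℝ), f (((-R:ℝ):ℂ) + (y:ℂ) * I) / ((((-R:ℝ):ℂ) + (y:ℂ) * I) + α)))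
          - 2 * (π:ℂ) * I * c₀ := by
    intro R hR
    have hRpos : (0:ℝ) < R := by linarith
    have hne_bot : ∀ x : ℝ, ((x:ℂ) + ((-R:ℝ):ℂ) * I) + α ≠ 0 := by
      intro x h0
      have : (((x:ℂ) + ((-R:ℝ):ℂ) * I) + α).im = 0 := by rw [h0]; simp
      simp at this
      linarith [habs_im.2]
    have hne_top : ∀ x : ℝ, ((x:ℂ) + ((0:ℝ):ℂ) * I) + α ≠ 0 := by
      intro x h0
      have : (((x:ℂ) + ((0:ℝ):ℂ) * I) + α).im = 0 := by rw [h0]; simp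
      simp at this
      linarith
    have hne_right : ∀ y : ℝ, ((R:ℂ) + (y:ℂ) * I) + α ≠ 0 := by
      intro y h0
      have : (((R:ℂ) + (y:ℂ) * I) + α).re = 0 := by rw [h0]; simp
      simp at this
      linarith [habs_re.1]
    have hne_left : ∀ y : ℝ, (((-R:ℝ):ℂ) + (y:ℂ) * I) + α ≠ 0 := by
      intro y h0
      have : ((((-R:ℝ):ℂ) + (y:ℂ) * I) + α).re = 0 := by rw [h0]; simp
      simp at this
      linarith [habs_re.2]
    have hsplit_bot := split_edge α c₀ f g hf.continuous hg.continuous hrel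
      (fun x : ℝ => (x:ℂ) + ((-R:ℝ):ℂ) * I) (Complex.continuous_ofReal.add continuous_const) hne_bot (-R) R
    have hsplit_top := split_edge α c₀ f g hf.continuous hg.continuous hrel
      (fun x : ℝ => (x:ℂ) + ((0:ℝ):ℂ) * I) (Complex.continuous_ofReal.add continuous_const) hne_top (-R) R
    have hsplit_right := split_edge α c₀ f g hf.continuous hg.continuous hrel
      (fun y : ℝ => (R:ℂ) + (y:ℂ) * I) (continuous_const.add (Complex.continuous_ofReal.mul continuous_const)) hne_right (-R) 0
    have hsplit_left := split_edge α c₀ f g hf.continuous hg.continuous hrel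
      (fun y : ℝ => ((-R:ℝ):ℂ) + (y:ℂ) * I) (continuous_const.add (Complex.continuous_ofReal.mul continuous_const)) hne_left (-R) 0
    have hrect_g := rect_zero' g (-R) R (-R) 0 hg.differentiableOn
    have hrect_p := rect_inv α hα R (by linarith)
    -- rewrite goal LHS as the top-edge integral
    have hLHS : (∫ x : ℝ in (-R)..R, f (x : ℂ) / ((x : ℂ) + α))
        = ∫ x : ℝ in (-R)..R, f ((x:ℂ) + ((0:ℝ):ℂ) * I) / (((x:ℂ) + ((0:ℝ):ℂ) * I) + α) := by
      apply intervalIntegral.integral_congr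
      intro x _
      norm_num
    rw [hLHS]
    simp only [smul_eq_mul] at hsplit_bot hsplit_top hsplit_right hsplit_left hrect_g hrect_p ⊢
    linear_combination hsplit_top - hsplit_bot - I * hsplit_right + I * hsplit_left
      - hrect_g - c₀ * hrect_p
  -- limits of the three small edges
  have hbndlim : Tendsto (fun R : ℝ => (R - ‖α‖)⁻¹) atTop (nhds 0) := by
    refine (tendsto_inv_atTop_zero.comp
      (tendsto_atTop_add_const_right atTop (-(‖α‖)) tendsto_id)).congr (fun R => ?_)
    simp [sub_eq_add_neg]
  have hlim_bot : Tendsto (fun R : ℝ =>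
      ∫ x : ℝ in (-R)..R, f ((x:ℂ) + ((-R:ℝ):ℂ) * I) / (((x:ℂ) + ((-R:ℝ):ℂ) * I) + α))
      atTop (nhds 0) := by
    apply squeeze_zero_norm' (a := fun R : ℝ => 2 * Real.exp (-R))
    · filter_upwards [eventually_ge_atTop (‖α‖ + 1)] with R hR
      have hRpos : (1:ℝ) ≤ R := by linarith
      have hb : ∀ x ∈ Set.uIoc (-R) R,
          ‖f ((x:ℂ) + ((-R:ℝ):ℂ) * I) / (((x:ℂ) + ((-R:ℝ):ℂ) * I) + α)‖
            ≤ Real.exp (π * (-R)) := by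
        intro x _
        have hzim : ((x:ℂ) + ((-R:ℝ):ℂ) * I).im = -R := by simp
        have habsz : R ≤ ‖((x:ℂ) + ((-R:ℝ):ℂ) * I)‖ := by
          have h1 := Complex.abs_im_le_norm ((x:ℂ) + ((-R:ℝ):ℂ) * I)
          rw [hzim, abs_neg, abs_of_pos (by linarith)] at h1
          exact h1
        have hd : 1 ≤ ‖((x:ℂ) + ((-R:ℝ):ℂ) * I) + α‖ := by
          have := abs_add_lower α ((x:ℂ) + ((-R:ℝ):ℂ) * I)
          linarith
        rw [norm_div, norm_exp_neg_pi_I_mul, hzim]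
        exact div_le_self (le_of_lt (Real.exp_pos _)) hd
      calc ‖∫ x : ℝ in (-R)..R, f ((x:ℂ) + ((-R:ℝ):ℂ) * I) / (((x:ℂ) + ((-R:ℝ):ℂ) * I) + α)‖
          ≤ Real.exp (π * (-R)) * |R - (-R)| :=
            intervalIntegral.norm_integral_le_of_norm_le_const hb
        _ ≤ 2 * Real.exp (-R) := by
            rw [sub_neg_eq_add, _root_.abs_of_nonneg (by linarith : (0:ℝ) ≤ R + R)]
            have h2le : Real.exp (π * (-R)) ≤ Real.exp (-R) * Real.exp (-R) := by
              rw [← Real.exp_add]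
              apply Real.exp_le_exp.mpr
              nlinarith [Real.two_le_pi]
            have h3 : R * Real.exp (-R) ≤ 1 := by
              have h4 := Real.add_one_le_exp R
              have h5 : Real.exp (-R) * Real.exp R = 1 := by rw [← Real.exp_add]; simp
              have h6 := Real.exp_pos (-R)
              nlinarith
            have h7 := Real.exp_pos (-R)
            nlinarith
    · simpa using Real.tendsto_exp_neg_atTop_nhds_zero.const_mul (2:ℝ)
  have vert_lim : ∀ (c : ℝ → ℝ), (∀ R, ‖α‖ + 1 ≤ R → |c R| = R) → (∀ R, ‖α‖ + 1 ≤ R →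
        (0:ℝ) < c R + α.re ∨ c R + α.re < 0) →
      Tendsto (fun R : ℝ =>
        I • ∫ y : ℝ in (-R)..(0:ℝ), f (((c R :ℝ):ℂ) + (y:ℂ) * I) / ((((c R:ℝ):ℂ) + (y:ℂ) * I) + α))
        atTop (nhds 0) := by
    intro c hc hsign
    apply squeeze_zero_norm' (a := fun R : ℝ => (R - ‖α‖)⁻¹)
    · filter_upwards [eventually_ge_atTop (‖α‖ + 1)] with R hR
      have hRpos : (1:ℝ) ≤ R := by linarith
      have hdp : (0:ℝ) < R - ‖α‖ := by linarith
      have hne : ∀ y : ℝ, (((c R :ℝ):ℂ) + (y:ℂ) * I) + α ≠ 0 := by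
        intro y h0
        have hre : ((((c R :ℝ):ℂ) + (y:ℂ) * I) + α).re = 0 := by rw [h0]; simp
        simp at hre
        rcases hsign R hR with h | h <;> linarith
      have hFcont : Continuous (fun y : ℝ =>
          f (((c R :ℝ):ℂ) + (y:ℂ) * I) / ((((c R:ℝ):ℂ) + (y:ℂ) * I) + α)) := by
        apply Continuous.div
        · exact hf.continuous.comp
            (continuous_const.add (Complex.continuous_ofReal.mul continuous_const))
        · exact (continuous_const.add (Complex.continuous_ofReal.mul continuous_const)).add
            continuous_const
        · exact hne
      have hGcont : Continuous (fun y : ℝ => Real.exp (π * y) * (R - ‖α‖)⁻¹) :=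
        (Real.continuous_exp.comp (continuous_const.mul continuous_id)).mul continuous_const
      rw [norm_smul, Complex.norm_I, one_mul]
      calc ‖∫ y : ℝ in (-R)..(0:ℝ),
            f (((c R :ℝ):ℂ) + (y:ℂ) * I) / ((((c R:ℝ):ℂ) + (y:ℂ) * I) + α)‖
          ≤ ∫ y : ℝ in (-R)..(0:ℝ),
            ‖f (((c R :ℝ):ℂ) + (y:ℂ) * I) / ((((c R:ℝ):ℂ) + (y:ℂ) * I) + α)‖ :=
            intervalIntegral.norm_integral_le_integral_norm (by linarith)
        _ ≤ ∫ y : ℝ in (-R)..(0:ℝ), Real.exp (π * y) * (R - ‖α‖)⁻¹ := by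
            apply intervalIntegral.integral_mono_on (by linarith : -R ≤ (0:ℝ))
              (hFcont.norm.intervalIntegrable _ _) (hGcont.intervalIntegrable _ _)
            intro y _
            have hzim : (((c R :ℝ):ℂ) + (y:ℂ) * I).im = y := by simp
            have habsz : R ≤ ‖(((c R :ℝ):ℂ) + (y:ℂ) * I)‖ := by
              have h1 := Complex.abs_re_le_norm (((c R :ℝ):ℂ) + (y:ℂ) * I)
              have h2 : (((c R :ℝ):ℂ) + (y:ℂ) * I).re = c R := by simp
              rw [h2, hc R hR] at h1
              exact h1
            have hz : R - ‖α‖ ≤ ‖((((c R:ℝ):ℂ) + (y:ℂ) * I) + α)‖ := by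
              have := abs_add_lower α (((c R :ℝ):ℂ) + (y:ℂ) * I)
              linarith
            rw [norm_div, norm_exp_neg_pi_I_mul, hzim, div_eq_mul_inv]
            exact mul_le_mul_of_nonneg_left (inv_anti₀ hdp hz)
              (le_of_lt (Real.exp_pos _))
        _ = (∫ y : ℝ in (-R)..(0:ℝ), Real.exp (π * y)) * (R - ‖α‖)⁻¹ :=
            intervalIntegral.integral_mul_const _ _
        _ ≤ 1 * (R - ‖α‖)⁻¹ :=
            mul_le_mul_of_nonneg_right (int_exp_pi R (by linarith)) (by positivity)
        _ = (R - ‖α‖)⁻¹ := one_mul _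
    · exact hbndlim
  have hlim_right : Tendsto (fun R : ℝ =>
      I • ∫ y : ℝ in (-R)..(0:ℝ), f ((R:ℂ) + (y:ℂ) * I) / (((R:ℂ) + (y:ℂ) * I) + α))
      atTop (nhds 0) := by
    have := vert_lim (fun R => R) (fun R hR => abs_of_nonneg (by linarith))
      (fun R hR => Or.inl (by show (0:ℝ) < R + α.re; linarith [habs_re.1]))
    exact this
  have hlim_left : Tendsto (fun R : ℝ =>
      I • ∫ y : ℝ in (-R)..(0:ℝ), f (((-R:ℝ):ℂ) + (y:ℂ) * I) / ((((-R:ℝ):ℂ) + (y:ℂ) * I) + α))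
      atTop (nhds 0) := by
    have := vert_lim (fun R => -R) (fun R hR => by rw [abs_neg]; exact abs_of_nonneg (by linarith))
      (fun R hR => Or.inr (by show -R + α.re < 0; linarith [habs_re.2]))
    exact this
  have hfinal : Tendsto (fun R : ℝ =>
      (((∫ x : ℝ in (-R)..R, f ((x:ℂ) + ((-R:ℝ):ℂ) * I) / (((x:ℂ) + ((-R:ℝ):ℂ) * I) + α))
        + I • (∫ y : ℝ in (-R)..(0:ℝ), f ((R:ℂ) + (y:ℂ) * I) / (((R:ℂ) + (y:ℂ) * I) + α)))
        - I • (∫ y : ℝ in (-R)..(0:ℝ), f (((-R:ℝ):ℂ) + (y:ℂ) * I) / ((((-R:ℝ):ℂ) + (y:ℂ) * I) + α)))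
        - 2 * (π:ℂ) * I * c₀) atTop (nhds (-(2 * (π:ℂ) * I * c₀))) := by
    have h0 : -(2 * (π:ℂ) * I * c₀) = (((0:ℂ) + 0) - 0) - 2 * (π:ℂ) * I * c₀ := by ring
    rw [h0]
    exact ((hlim_bot.add hlim_right).sub hlim_left).sub_const _
  apply hfinal.congr'
  filter_upwards [eventually_ge_atTop (‖α‖ + 1)] with R hR
  exact (main R hR).symm

lemma int_exp_pi' (R : ℝ) (hR : 0 ≤ R) :
    (∫ y : ℝ in (0:ℝ)..R, Real.exp (π * (-y))) ≤ 1 := by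
  have h := intervalIntegral.integral_comp_neg (a := (0:ℝ)) (b := R)
    (fun y : ℝ => Real.exp (π * y))
  rw [h, neg_zero]
  exact int_exp_pi R hR

lemma tendsto_A (α : ℂ) (hα : 0 < α.im) :
    Tendsto (fun R : ℝ => ∫ x : ℝ in (-R)..R, Complex.exp ((π:ℂ) * I * x) / ((x : ℂ) + α))
      atTop (nhds 0) := by
  have habs0 : (0:ℝ) ≤ ‖α‖ := norm_nonneg α
  have habs_im := Complex.abs_im_le_norm α
  have habs_re := Complex.abs_re_le_norm α
  rw [abs_le] at habs_im habs_re
  set F : ℂ → ℂ := fun z => Complex.exp ((π:ℂ) * I * z) / (z + α) with hF_def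
  have hnum : Differentiable ℂ (fun z : ℂ => Complex.exp ((π:ℂ) * I * z)) :=
    ((differentiable_const ((π:ℂ) * I)).mul differentiable_id).cexp
  have main : ∀ R : ℝ, ‖α‖ + 1 ≤ R →
      (∫ x : ℝ in (-R)..R, F (x : ℂ))
        = (((∫ x : ℝ in (-R)..R, F ((x:ℂ) + ((R:ℝ):ℂ) * I))
          - I • (∫ y : ℝ in (0:ℝ)..R, F ((R:ℂ) + (y:ℂ) * I)))
          + I • (∫ y : ℝ in (0:ℝ)..R, F (((-R:ℝ):ℂ) + (y:ℂ) * I))) := by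
    intro R hR
    have hRpos : (0:ℝ) < R := by linarith
    have hFd : DifferentiableOn ℂ F (Set.uIcc (-R) R ×ℂ Set.uIcc 0 R) := by
      apply DifferentiableOn.div hnum.differentiableOn
        (differentiable_id.add_const α).differentiableOn
      intro z hz
      rw [Complex.mem_reProdIm] at hz
      have h1 : (0:ℝ) ≤ z.im := by
        have := hz.2
        rw [Set.uIcc_of_le (le_of_lt hRpos)] at this
        exact this.1
      intro h0
      have : (z + α).im = 0 := by
        have h0' : z + α = 0 := h0
        rw [h0']; simp
      simp at this
      linarith
    have hrect := rect_zero' F (-R) R 0 R hFd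
    have hLHS : (∫ x : ℝ in (-R)..R, F (x : ℂ))
        = ∫ x : ℝ in (-R)..R, F ((x:ℂ) + ((0:ℝ):ℂ) * I) := by
      apply intervalIntegral.integral_congr
      intro x _
      norm_num
    rw [hLHS]
    linear_combination hrect
  have hbndlim : Tendsto (fun R : ℝ => (R - ‖α‖)⁻¹) atTop (nhds 0) := by
    refine (tendsto_inv_atTop_zero.comp
      (tendsto_atTop_add_const_right atTop (-(‖α‖)) tendsto_id)).congr (fun R => ?_)
    simp [sub_eq_add_neg]
  have hlim_top : Tendsto (fun R : ℝ =>
      ∫ x : ℝ in (-R)..R, F ((x:ℂ) + ((R:ℝ):ℂ) * I)) atTop (nhds 0) := by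
    apply squeeze_zero_norm' (a := fun R : ℝ => 2 * Real.exp (-R))
    · filter_upwards [eventually_ge_atTop (‖α‖ + 1)] with R hR
      have hRpos : (1:ℝ) ≤ R := by linarith
      have hb : ∀ x ∈ Set.uIoc (-R) R,
          ‖F ((x:ℂ) + ((R:ℝ):ℂ) * I)‖ ≤ Real.exp (-(π * R)) := by
        intro x _
        have hzim : ((x:ℂ) + ((R:ℝ):ℂ) * I).im = R := by simp
        have habsz : R ≤ ‖((x:ℂ) + ((R:ℝ):ℂ) * I)‖ := by
          have h1 := Complex.abs_im_le_norm ((x:ℂ) + ((R:ℝ):ℂ) * I)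
          rw [hzim, _root_.abs_of_pos (by linarith)] at h1
          exact h1
        have hd : 1 ≤ ‖((x:ℂ) + ((R:ℝ):ℂ) * I) + α‖ := by
          have := abs_add_lower α ((x:ℂ) + ((R:ℝ):ℂ) * I)
          linarith
        show ‖Complex.exp ((π:ℂ) * I * ((x:ℂ) + ((R:ℝ):ℂ) * I)) / (((x:ℂ) + ((R:ℝ):ℂ) * I) + α)‖
          ≤ Real.exp (-(π * R))
        rw [norm_div, norm_exp_pi_I_mul, hzim]
        exact div_le_self (le_of_lt (Real.exp_pos _)) hd
      calc ‖∫ x : ℝ in (-R)..R, F ((x:ℂ) + ((R:ℝ):ℂ) * I)‖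
          ≤ Real.exp (-(π * R)) * |R - (-R)| :=
            intervalIntegral.norm_integral_le_of_norm_le_const hb
        _ ≤ 2 * Real.exp (-R) := by
            rw [sub_neg_eq_add, _root_.abs_of_nonneg (by linarith : (0:ℝ) ≤ R + R)]
            have h2le : Real.exp (-(π * R)) ≤ Real.exp (-R) * Real.exp (-R) := by
              rw [← Real.exp_add]
              apply Real.exp_le_exp.mpr
              nlinarith [Real.two_le_pi]
            have h3 : R * Real.exp (-R) ≤ 1 := by
              have h4 := Real.add_one_le_exp R
              have h5 : Real.exp (-R) * Real.exp R = 1 := by rw [← Real.exp_add]; simp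
              have h6 := Real.exp_pos (-R)
              nlinarith
            have h7 := Real.exp_pos (-R)
            nlinarith
    · simpa using Real.tendsto_exp_neg_atTop_nhds_zero.const_mul (2:ℝ)
  have vert_lim : ∀ (c : ℝ → ℝ), (∀ R, ‖α‖ + 1 ≤ R → |c R| = R) →
      (∀ R, ‖α‖ + 1 ≤ R → (0:ℝ) < c R + α.re ∨ c R + α.re < 0) →
      Tendsto (fun R : ℝ =>
        I • ∫ y : ℝ in (0:ℝ)..R, F (((c R :ℝ):ℂ) + (y:ℂ) * I)) atTop (nhds 0) := by
    intro c hc hsign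
    apply squeeze_zero_norm' (a := fun R : ℝ => (R - ‖α‖)⁻¹)
    · filter_upwards [eventually_ge_atTop (‖α‖ + 1)] with R hR
      have hRpos : (1:ℝ) ≤ R := by linarith
      have hdp : (0:ℝ) < R - ‖α‖ := by linarith
      have hne : ∀ y : ℝ, (((c R :ℝ):ℂ) + (y:ℂ) * I) + α ≠ 0 := by
        intro y h0
        have hre : ((((c R :ℝ):ℂ) + (y:ℂ) * I) + α).re = 0 := by rw [h0]; simp
        simp at hre
        rcases hsign R hR with h | h <;> linarith
      have hFcont : Continuous (fun y : ℝ => F (((c R :ℝ):ℂ) + (y:ℂ) * I)) := by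
        apply Continuous.div
        · exact hnum.continuous.comp
            (continuous_const.add (Complex.continuous_ofReal.mul continuous_const))
        · exact (continuous_const.add (Complex.continuous_ofReal.mul continuous_const)).add
            continuous_const
        · exact hne
      have hGcont : Continuous (fun y : ℝ => Real.exp (π * (-y)) * (R - ‖α‖)⁻¹) :=
        (Real.continuous_exp.comp (continuous_const.mul continuous_neg)).mul continuous_const
      rw [norm_smul, Complex.norm_I, one_mul]
      calc ‖∫ y : ℝ in (0:ℝ)..R, F (((c R :ℝ):ℂ) + (y:ℂ) * I)‖
          ≤ ∫ y : ℝ in (0:ℝ)..R, ‖F (((c R :ℝ):ℂ) + (y:ℂ) * I)‖ :=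
            intervalIntegral.norm_integral_le_integral_norm (by linarith)
        _ ≤ ∫ y : ℝ in (0:ℝ)..R, Real.exp (π * (-y)) * (R - ‖α‖)⁻¹ := by
            apply intervalIntegral.integral_mono_on (by linarith : (0:ℝ) ≤ R)
              (hFcont.norm.intervalIntegrable _ _) (hGcont.intervalIntegrable _ _)
            intro y _
            have hzim : (((c R :ℝ):ℂ) + (y:ℂ) * I).im = y := by simp
            have habsz : R ≤ ‖(((c R :ℝ):ℂ) + (y:ℂ) * I)‖ := by
              have h1 := Complex.abs_re_le_norm (((c R :ℝ):ℂ) + (y:ℂ) * I)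
              have h2 : (((c R :ℝ):ℂ) + (y:ℂ) * I).re = c R := by simp
              rw [h2, hc R hR] at h1
              exact h1
            have hz : R - ‖α‖ ≤ ‖((((c R:ℝ):ℂ) + (y:ℂ) * I) + α)‖ := by
              have := abs_add_lower α (((c R :ℝ):ℂ) + (y:ℂ) * I)
              linarith
            show ‖Complex.exp ((π:ℂ) * I * (((c R :ℝ):ℂ) + (y:ℂ) * I))
                / ((((c R :ℝ):ℂ) + (y:ℂ) * I) + α)‖
              ≤ Real.exp (π * (-y)) * (R - ‖α‖)⁻¹
            rw [norm_div, norm_exp_pi_I_mul, hzim, div_eq_mul_inv]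
            have he : -(π * y) = π * (-y) := by ring
            rw [← he]
            exact mul_le_mul_of_nonneg_left (inv_anti₀ hdp hz) (le_of_lt (Real.exp_pos _))
        _ = (∫ y : ℝ in (0:ℝ)..R, Real.exp (π * (-y))) * (R - ‖α‖)⁻¹ :=
            intervalIntegral.integral_mul_const _ _
        _ ≤ 1 * (R - ‖α‖)⁻¹ :=
            mul_le_mul_of_nonneg_right (int_exp_pi' R (by linarith)) (by positivity)
        _ = (R - ‖α‖)⁻¹ := one_mul _
    · exact hbndlim
  have hlim_right : Tendsto (fun R : ℝ =>
      I • ∫ y : ℝ in (0:ℝ)..R, F ((R:ℂ) + (y:ℂ) * I)) atTop (nhds 0) := by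
    have := vert_lim (fun R => R) (fun R hR => _root_.abs_of_nonneg (by linarith))
      (fun R hR => Or.inl (by show (0:ℝ) < R + α.re; linarith [habs_re.1]))
    exact this
  have hlim_left : Tendsto (fun R : ℝ =>
      I • ∫ y : ℝ in (0:ℝ)..R, F (((-R:ℝ):ℂ) + (y:ℂ) * I)) atTop (nhds 0) := by
    have := vert_lim (fun R => -R)
      (fun R hR => by rw [abs_neg]; exact _root_.abs_of_nonneg (by linarith))
      (fun R hR => Or.inr (by show -R + α.re < 0; linarith [habs_re.2]))
    exact this
  have hfinal : Tendsto (fun R : ℝ =>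
      (((∫ x : ℝ in (-R)..R, F ((x:ℂ) + ((R:ℝ):ℂ) * I))
        - I • (∫ y : ℝ in (0:ℝ)..R, F ((R:ℂ) + (y:ℂ) * I)))
        + I • (∫ y : ℝ in (0:ℝ)..R, F (((-R:ℝ):ℂ) + (y:ℂ) * I)))) atTop (nhds 0) := by
    have h0 : (0:ℂ) = ((0:ℂ) - 0) + 0 := by ring
    rw [h0]
    exact (hlim_top.sub hlim_right).add hlim_left
  apply hfinal.congr'
  filter_upwards [eventually_ge_atTop (‖α‖ + 1)] with R hR
  exact (main R hR).symm

theorem improper_integral_sin_div_linear (α : ℂ) (hα : 0 < α.im) :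
    Tendsto (fun R : ℝ => ∫ x in (-R)..R, Complex.sin (π * x) / ((x : ℂ) + α))
      atTop (nhds ((π : ℂ) * Complex.exp (Complex.I * π * α))) := by
  have hne : ∀ x : ℝ, (x : ℂ) + α ≠ 0 := by
    intro x h0
    have : ((x:ℂ) + α).im = 0 := by rw [h0]; simp
    simp at this
    linarith
  have hpt : ∀ x : ℝ, Complex.sin (π * x) / ((x : ℂ) + α)
      = (I/2) * (Complex.exp (-((π:ℂ) * I * x)) / ((x : ℂ) + α))
        - (I/2) * (Complex.exp ((π:ℂ) * I * x) / ((x : ℂ) + α)) := by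
    intro x
    have hs : Complex.sin (π * x)
        = (Complex.exp (-((π:ℂ) * I * x)) - Complex.exp ((π:ℂ) * I * x)) * I / 2 := by
      show (Complex.exp (-((π:ℂ) * (x:ℂ)) * I) - Complex.exp (((π:ℂ) * (x:ℂ)) * I)) * I / 2
        = _
      have e1 : -((π:ℂ) * (x:ℂ)) * I = -((π:ℂ) * I * x) := by ring
      have e2 : ((π:ℂ) * (x:ℂ)) * I = (π:ℂ) * I * x := by ring
      rw [e1, e2]
    rw [hs]
    field_simp
  have hintm : ∀ (R : ℝ),
      (∫ x : ℝ in (-R)..R, Complex.sin (π * x) / ((x : ℂ) + α))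
        = (I/2) * (∫ x : ℝ in (-R)..R, Complex.exp (-((π:ℂ) * I * x)) / ((x : ℂ) + α))
          - (I/2) * (∫ x : ℝ in (-R)..R, Complex.exp ((π:ℂ) * I * x) / ((x : ℂ) + α)) := by
    intro R
    have hc1 : Continuous fun x : ℝ => Complex.exp (-((π:ℂ) * I * x)) / ((x : ℂ) + α) := by
      apply Continuous.div
      · exact Complex.continuous_exp.comp
          ((continuous_const.mul Complex.continuous_ofReal).neg)
      · exact Complex.continuous_ofReal.add continuous_const
      · exact hne
    have hc2 : Continuous fun x : ℝ => Complex.exp ((π:ℂ) * I * x) / ((x : ℂ) + α) := by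
      apply Continuous.div
      · exact Complex.continuous_exp.comp (continuous_const.mul Complex.continuous_ofReal)
      · exact Complex.continuous_ofReal.add continuous_const
      · exact hne
    rw [← intervalIntegral.integral_const_mul, ← intervalIntegral.integral_const_mul,
      ← intervalIntegral.integral_sub
        ((hc1.intervalIntegrable _ _).const_mul (I/2))
        ((hc2.intervalIntegrable _ _).const_mul (I/2))]
    apply intervalIntegral.integral_congr
    intro x _
    exact hpt x
  have hT : Tendsto (fun R : ℝ =>
      (I/2) * (∫ x : ℝ in (-R)..R, Complex.exp (-((π:ℂ) * I * x)) / ((x : ℂ) + α))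
        - (I/2) * (∫ x : ℝ in (-R)..R, Complex.exp ((π:ℂ) * I * x) / ((x : ℂ) + α)))
      atTop (nhds ((I/2) * -(2 * (π:ℂ) * I * Complex.exp ((π:ℂ) * I * α)) - (I/2) * 0)) :=
    ((tendsto_B α hα).const_mul (I/2)).sub ((tendsto_A α hα).const_mul (I/2))
  have hval : (I/2) * -(2 * (π:ℂ) * I * Complex.exp ((π:ℂ) * I * α)) - (I/2) * 0
      = (π : ℂ) * Complex.exp (Complex.I * π * α) := by
    have he : Complex.exp ((π:ℂ) * I * α) = Complex.exp (Complex.I * π * α) := by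
      congr 1
      ring
    rw [he]
    have hI := Complex.I_mul_I
    linear_combination (-(π:ℂ) * Complex.exp (Complex.I * (π:ℂ) * α)) * hI
  rw [hval] at hT
  apply hT.congr
  intro R
  exact (hintm R).symm
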